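/- For any admissible sequential strategy in the d-armed stochastic bandit problem with Bernoulli rewards, after n plays the expected regret and the pseudo-regret satisfy 0 ≤ E[Rₙ] − R̄ₙ ≤ √(n·log(d)/2). -/

import Mathlib

open MeasureTheory ProbabilityTheory Real Filter

noncomputable section

/-- An admissible sequential strategy for the `d`-armed stochastic bandit problem
with Bernoulli rewards.  `A k j` is the (0/1-valued) Bernoulli(p j) reward of arm `j`
at play `k`, the rewards being mutually independent; `I k` is the arm selected at
play `k`.  Admissibility: `I k` is measurable for a filtration `F` (past plays, past
observed rewards and independent auxiliary randomness) such that `F k` is independent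
of the rewards from time `k` on, and the observed reward at play `k` is
`F (k+1)`-measurable. -/
structure Bandit (d : ℕ) (Ω : Type) [mΩ : MeasurableSpace Ω] where
  μ : Measure Ω
  prob : IsProbabilityMeasure μ
  p : Fin d → ℝ
  hp : ∀ j, p j ∈ Set.Icc (0:ℝ) 1
  A : ℕ → Fin d → Ω → ℝ
  I : ℕ → Ω → Fin d
  F : Filtration ℕ mΩ
  hAmeas : ∀ n j, Measurable (A n j)
  hAval : ∀ n j ω, A n j ω = 0 ∨ A n j ω = 1
  hAlaw : ∀ n j, μ {ω | A n j ω = 1} = ENNReal.ofReal (p j)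
  hIndep : iIndepFun (m := fun _ : ℕ × Fin d => (inferInstance : MeasurableSpace ℝ))
      (fun k => A k.1 k.2) μ
  hImeas : ∀ n, Measurable[F n] (I n)
  hObs : ∀ n, Measurable[F (n+1)] (fun ω => A n (I n ω) ω)
  hIndepFuture : ∀ n, Indep (F n)
      (⨆ (m : ℕ) (_ : n ≤ m) (j : Fin d), MeasurableSpace.comap (A m j) inferInstance) μ

/-- The regret after `n` plays: `Rₙ = max_j ∑_{k=1}^n (A_k^j - A_k^{I_k})`. -/
def Bandit.regret {d : ℕ} {Ω : Type} [MeasurableSpace Ω] (S : Bandit d Ω)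
    (n : ℕ) (ω : Ω) : ℝ :=
  ⨆ j : Fin d, ∑ k ∈ Finset.range n, (S.A k j ω - S.A k (S.I k ω) ω)

/-- The pseudo-regret after `n` plays: `R̄ₙ = max_j E[∑_{k=1}^n (A_k^j - A_k^{I_k})]`. -/
def Bandit.pseudoRegret {d : ℕ} {Ω : Type} [MeasurableSpace Ω] (S : Bandit d Ω)
    (n : ℕ) : ℝ :=
  ⨆ j : Fin d, ∫ ω, (∑ k ∈ Finset.range n, (S.A k j ω - S.A k (S.I k ω) ω)) ∂S.μ


lemma bern_pos {p : ℝ} (hp0 : 0 ≤ p) (hp1 : p ≤ 1) (x : ℝ) :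
    0 < 1 - p + p * exp x := by
  rcases eq_or_lt_of_le hp0 with h | h
  · simp [← h]
  · nlinarith [exp_pos x, mul_pos h (exp_pos x)]

lemma bern_log_le {p : ℝ} (hp0 : 0 ≤ p) (hp1 : p ≤ 1) {t : ℝ} (ht : 0 ≤ t) :
    Real.log (1 - p + p * exp t) ≤ p * t + t ^ 2 / 8 := by
  set F : ℝ → ℝ := fun x => p * x + x ^ 2 / 8 - Real.log (1 - p + p * exp x) with hF
  set G : ℝ → ℝ := fun x => p + x / 4 - p * exp x / (1 - p + p * exp x) with hG
  have hv : ∀ x : ℝ, HasDerivAt (fun x => 1 - p + p * exp x) (p * exp x) x := by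
    intro x
    simpa using ((Real.hasDerivAt_exp x).const_mul p).const_add (1 - p)
  have hFd : ∀ x : ℝ, HasDerivAt F (G x) x := by
    intro x
    have h1 : HasDerivAt (fun x : ℝ => p * x + x ^ 2 / 8) (p + 2 * x / 8) x := by
      simpa using ((hasDerivAt_id x).const_mul p).fun_add ((hasDerivAt_pow 2 x).div_const 8)
    have h2 : HasDerivAt (fun x => Real.log (1 - p + p * exp x))
        (p * exp x / (1 - p + p * exp x)) x := (hv x).log (bern_pos hp0 hp1 x).ne'
    have := h1.fun_sub h2
    refine this.congr_deriv ?_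
    ring
  have hGd : ∀ x : ℝ, HasDerivAt G
      (1 / 4 - p * exp x * (1 - p) / (1 - p + p * exp x) ^ 2) x := by
    intro x
    have h1 : HasDerivAt (fun x : ℝ => p + x / 4) (1 / 4) x := by
      simpa using ((hasDerivAt_id x).div_const 4).const_add p
    have h2 : HasDerivAt (fun x => p * exp x / (1 - p + p * exp x))
        ((p * exp x * (1 - p + p * exp x) - p * exp x * (p * exp x)) /
          (1 - p + p * exp x) ^ 2) x :=
      ((Real.hasDerivAt_exp x).const_mul p).div (hv x) (bern_pos hp0 hp1 x).ne'
    have := h1.fun_sub h2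
    refine this.congr_deriv ?_
    have hvx := (bern_pos hp0 hp1 x).ne'
    field_simp
    ring
  have hGmono : Monotone G := by
    apply monotone_of_deriv_nonneg (fun x => (hGd x).differentiableAt)
    intro x
    rw [(hGd x).deriv]
    have h1 : 0 < 1 - p + p * exp x := bern_pos hp0 hp1 x
    have h2 : 0 ≤ p * exp x := by positivity
    have key : p * exp x * (1 - p) * 4 ≤ (1 - p + p * exp x) ^ 2 := by nlinarith [sq_nonneg (1 - p - p * exp x)]
    rw [sub_nonneg, div_le_iff₀ (by positivity)]
    linarith
  have hG0 : G 0 = 0 := by simp [hG]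
  have hFmono : MonotoneOn F (Set.Ici (0:ℝ)) := by
    apply monotoneOn_of_deriv_nonneg (convex_Ici 0)
      (fun x _ => (hFd x).differentiableAt.continuousAt.continuousWithinAt)
      (fun x _ => (hFd x).differentiableAt.differentiableWithinAt)
    intro x hx
    rw [(hFd x).deriv]
    rw [interior_Ici] at hx
    have := hGmono (le_of_lt hx)
    rw [hG0] at this
    exact this
  have hF0 : F 0 = 0 := by simp [hF]
  have := hFmono Set.self_mem_Ici ht ht
  rw [hF0] at this
  simp only [hF] at this
  linarith

lemma bern_mgf_le {p : ℝ} (hp0 : 0 ≤ p) (hp1 : p ≤ 1) {t : ℝ} (ht : 0 ≤ t) :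
    (1 - p) * exp (t * (0 - p)) + p * exp (t * (1 - p)) ≤ exp (t ^ 2 / 8) := by
  have h := bern_log_le hp0 hp1 ht
  have hv := bern_pos hp0 hp1 t
  have : (1 - p) * exp (t * (0 - p)) + p * exp (t * (1 - p))
      = exp (-(t * p)) * (1 - p + p * exp t) := by
    rw [show t * (0 - p) = -(t * p) by ring, show t * (1 - p) = -(t * p) + t by ring,
      Real.exp_add]
    ring
  rw [this]
  calc exp (-(t * p)) * (1 - p + p * exp t)
      = exp (-(t * p) + Real.log (1 - p + p * exp t)) := by
        rw [Real.exp_add, Real.exp_log hv]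
    _ ≤ exp (t ^ 2 / 8) := by
        apply Real.exp_le_exp.2
        linarith
section Aux
variable {d : ℕ} {Ω : Type} [MeasurableSpace Ω] (S : Bandit d Ω)

lemma integrable_of_bdd {μ : Measure Ω} [IsFiniteMeasure μ] {f : Ω → ℝ} (C : ℝ)
    (hf : Measurable f) (h : ∀ ω, |f ω| ≤ C) : Integrable f μ :=
  (integrable_const C).mono' hf.aestronglyMeasurable
    (Filter.Eventually.of_forall (by simpa [Real.norm_eq_abs] using h))

lemma Bandit.A_abs_le (k : ℕ) (j : Fin d) (ω : Ω) : |S.A k j ω| ≤ 1 := by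
  rcases S.hAval k j ω with h | h <;> rw [h] <;> norm_num

lemma Bandit.meas_one (k : ℕ) (j : Fin d) :
    S.μ (S.A k j ⁻¹' {1}) = ENNReal.ofReal (S.p j) := S.hAlaw k j

lemma Bandit.integral_fA (k : ℕ) (j : Fin d) (f : ℝ → ℝ) :
    ∫ ω, f (S.A k j ω) ∂S.μ = (1 - S.p j) * f 0 + S.p j * f 1 := by
  haveI := S.prob
  have hmeas : MeasurableSet (S.A k j ⁻¹' {1}) := S.hAmeas k j (measurableSet_singleton 1)
  have hA : ∫ ω, S.A k j ω ∂S.μ = S.p j := by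
    have hrw : S.A k j = Set.indicator (S.A k j ⁻¹' {1}) (fun _ => (1:ℝ)) := by
      funext ω
      rcases S.hAval k j ω with h | h
      · rw [Set.indicator_of_notMem (by simp [Set.mem_preimage, h]), h]
      · rw [Set.indicator_of_mem (by simp [Set.mem_preimage, h]), h]
    rw [hrw, integral_indicator_const _ hmeas, measureReal_def, S.meas_one k j, smul_eq_mul,
      ENNReal.toReal_ofReal (S.hp j).1, mul_one]
  have hval : (fun ω => f (S.A k j ω)) = fun ω => f 0 + (f 1 - f 0) * S.A k j ω := by
    funext ω
    rcases S.hAval k j ω with h | h <;> rw [h] <;> ring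
  have hint : Integrable (S.A k j) S.μ :=
    integrable_of_bdd 1 (S.hAmeas k j) (S.A_abs_le k j)
  rw [hval, integral_add (integrable_const _) (hint.const_mul _), integral_const,
    integral_const_mul, hA]
  simp
  ring

lemma Bandit.integral_A (k : ℕ) (j : Fin d) : ∫ ω, S.A k j ω ∂S.μ = S.p j := by
  have := S.integral_fA k j id
  simpa using this

/-- the rewards of a single fixed arm are i.i.d. over time -/
lemma Bandit.indep_arm (j : Fin d) :
    iIndepFun (m := fun _ : ℕ => (inferInstance : MeasurableSpace ℝ)) (fun k => S.A k j) S.μ := by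
  classical
  rw [iIndepFun_iff_measure_inter_preimage_eq_mul]
  intro s sets hsets
  have hinj : Function.Injective (fun k : ℕ => (k, j)) := fun a b h => (Prod.mk.injEq _ _ _ _ ▸ h).1
  set sets' : ℕ × Fin d → Set ℝ := fun q => if q.2 = j then sets q.1 else Set.univ with hsets'
  have h := S.hIndep.measure_inter_preimage_eq_mul (s.image (fun k => (k, j)))
    (sets := sets') ?_
  · have hL : (⋂ q ∈ s.image (fun k => (k, j)), (fun ω => S.A q.1 q.2 ω) ⁻¹' sets' q)
        = ⋂ k ∈ s, S.A k j ⁻¹' sets k := by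
      ext ω
      simp only [Set.mem_iInter, Finset.mem_image]
      constructor
      · intro h k hk
        have := h (k, j) ⟨k, hk, rfl⟩
        simpa [hsets'] using this
      · rintro h q ⟨k, hk, rfl⟩
        simpa [hsets'] using h k hk
    have hR : ∏ q ∈ s.image (fun k => (k, j)), S.μ ((fun ω => S.A q.1 q.2 ω) ⁻¹' sets' q)
        = ∏ k ∈ s, S.μ (S.A k j ⁻¹' sets k) := by
      rw [Finset.prod_image (fun a _ b _ h => hinj h)]
      apply Finset.prod_congr rfl
      intro k _
      simp [hsets']
    rw [hL, hR] at h
    exact h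
  · rintro q hq
    rw [Finset.mem_image] at hq
    obtain ⟨k, hk, rfl⟩ := hq
    simpa [hsets'] using hsets k hk

end Aux
section Core
variable {d : ℕ} {Ω : Type} [MeasurableSpace Ω] (S : Bandit d Ω)

lemma Bandit.A_nonneg (k : ℕ) (j : Fin d) (ω : Ω) : 0 ≤ S.A k j ω := by
  rcases S.hAval k j ω with h | h <;> rw [h] <;> norm_num

lemma Bandit.A_le_one (k : ℕ) (j : Fin d) (ω : Ω) : S.A k j ω ≤ 1 := by
  rcases S.hAval k j ω with h | h <;> rw [h] <;> norm_num

lemma Bandit.integral_iSup_Z_le (hd : 1 ≤ d) (n : ℕ) :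
    ∫ ω, (⨆ j : Fin d, ∑ k ∈ Finset.range n, (S.A k j ω - S.p j)) ∂S.μ
      ≤ Real.sqrt ((n : ℝ) * Real.log d / 2) := by
  classical
  haveI := S.prob
  haveI : Nonempty (Fin d) := Fin.pos_iff_nonempty.mp hd
  set Z : Fin d → Ω → ℝ := fun j ω => ∑ k ∈ Finset.range n, (S.A k j ω - S.p j) with hZ
  have hZmeas : ∀ j, Measurable (Z j) := fun j =>
    Finset.measurable_sum _ (fun k _ => (S.hAmeas k j).sub measurable_const)
  have hZbd : ∀ j ω, |Z j ω| ≤ n := by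
    intro j ω
    calc |Z j ω| ≤ ∑ k ∈ Finset.range n, |S.A k j ω - S.p j| :=
          Finset.abs_sum_le_sum_abs _ _
      _ ≤ ∑ _k ∈ Finset.range n, (1 : ℝ) := by
          apply Finset.sum_le_sum
          intro k _
          have h1 := S.A_nonneg k j ω
          have h2 := S.A_le_one k j ω
          have h3 := (S.hp j).1
          have h4 := (S.hp j).2
          rw [abs_le]
          constructor <;> linarith
      _ = n := by simp
  have hZint : ∀ j, Integrable (Z j) S.μ := fun j =>
    integrable_of_bdd n (hZmeas j) (hZbd j)
  have hbdd : ∀ ω, BddAbove (Set.range fun j => Z j ω) := fun ω =>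
    Set.Finite.bddAbove (Set.finite_range _)
  have hsupmeas : Measurable (fun ω => ⨆ j, Z j ω) := Measurable.iSup hZmeas
  have hsupbd : ∀ ω, |⨆ j, Z j ω| ≤ n := by
    intro ω
    rw [abs_le]
    constructor
    · calc -(n:ℝ) ≤ Z (Classical.arbitrary _) ω := by
            have := hZbd (Classical.arbitrary _) ω; rw [abs_le] at this; exact this.1
        _ ≤ ⨆ j, Z j ω := le_ciSup (hbdd ω) _
    · exact ciSup_le fun j => (abs_le.1 (hZbd j ω)).2
  have hsupint : Integrable (fun ω => ⨆ j, Z j ω) S.μ :=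
    integrable_of_bdd n hsupmeas hsupbd
  have hZzero : ∀ j, ∫ ω, Z j ω ∂S.μ = 0 := by
    intro j
    show ∫ ω, (∑ k ∈ Finset.range n, (S.A k j ω - S.p j)) ∂S.μ = 0
    rw [integral_finset_sum (Finset.range n) (f := fun k ω => S.A k j ω - S.p j) (fun k _ =>
      (integrable_of_bdd 1 (S.hAmeas k j) (S.A_abs_le k j)).sub (integrable_const _))]
    apply Finset.sum_eq_zero
    intro k _
    rw [integral_sub (integrable_of_bdd 1 (S.hAmeas k j) (S.A_abs_le k j))
      (integrable_const _), S.integral_A k j, integral_const]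
    simp
  rcases Nat.lt_or_ge d 2 with hd2 | hd2
  · -- d = 1
    obtain rfl : d = 1 := by omega
    have : (fun ω => ⨆ j, Z j ω) = Z default := by
      funext ω; exact ciSup_unique
    rw [this, hZzero]
    exact Real.sqrt_nonneg _
  rcases Nat.eq_zero_or_pos n with rfl | hn
  · -- n = 0
    have : (fun ω => ⨆ j : Fin d, Z j ω) = fun _ => (0:ℝ) := by
      funext ω; simp [hZ]
    rw [this, integral_zero]
    exact Real.sqrt_nonneg _
  -- main case
  have hd2' : (1:ℝ) < d := by exact_mod_cast hd2
  set L := Real.log d with hLdef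
  have hL : 0 < L := Real.log_pos hd2'
  have hn' : (0:ℝ) < n := by exact_mod_cast hn
  set t := Real.sqrt (8 * L / n) with htdef
  have ht : 0 < t := Real.sqrt_pos.2 (by positivity)
  have ht2 : t ^ 2 = 8 * L / n := Real.sq_sqrt (by positivity)
  set Y : Ω → ℝ := fun ω => ∑ j : Fin d, Real.exp (t * Z j ω) with hY
  have hYmeas : Measurable Y :=
    Finset.measurable_sum _ (fun j _ => ((hZmeas j).const_mul t).exp)
  have hYlb : ∀ ω, Real.exp (-(t * n)) ≤ Y ω := by
    intro ω
    calc Real.exp (-(t * n)) ≤ Real.exp (t * Z (Classical.arbitrary _) ω) := by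
          apply Real.exp_le_exp.2
          have := (abs_le.1 (hZbd (Classical.arbitrary _) ω)).1
          nlinarith
      _ ≤ Y ω := Finset.single_le_sum (f := fun j => Real.exp (t * Z j ω)) (fun j _ => (Real.exp_pos _).le) (Finset.mem_univ _)
  have hYpos : ∀ ω, 0 < Y ω := fun ω => lt_of_lt_of_le (Real.exp_pos _) (hYlb ω)
  have hYub : ∀ ω, Y ω ≤ d * Real.exp (t * n) := by
    intro ω
    calc Y ω ≤ ∑ _j : Fin d, Real.exp (t * n) := by
          apply Finset.sum_le_sum
          intro j _
          apply Real.exp_le_exp.2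
          have := (abs_le.1 (hZbd j ω)).2
          nlinarith
      _ = d * Real.exp (t * n) := by simp [mul_comm]
  have hYint : Integrable Y S.μ := by
    apply integrable_of_bdd (d * Real.exp (t * n)) hYmeas
    intro ω
    rw [abs_of_pos (hYpos ω)]
    exact hYub ω
  -- pointwise bound
  have step1 : ∀ ω, (⨆ j, Z j ω) ≤ Real.log (Y ω) / t := by
    intro ω
    apply ciSup_le
    intro j
    rw [le_div_iff₀ ht]
    calc Z j ω * t = t * Z j ω := mul_comm _ _
      _ = Real.log (Real.exp (t * Z j ω)) := (Real.log_exp _).symm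
      _ ≤ Real.log (Y ω) := Real.log_le_log (Real.exp_pos _)
          (Finset.single_le_sum (f := fun j => Real.exp (t * Z j ω)) (fun j _ => (Real.exp_pos _).le) (Finset.mem_univ j))
  have hlogbd : ∀ ω, |Real.log (Y ω)| ≤ L + t * n := by
    intro ω
    rw [abs_le]
    constructor
    · calc -(L + t * n) ≤ -(t * n) := by nlinarith
        _ = Real.log (Real.exp (-(t * n))) := (Real.log_exp _).symm
        _ ≤ Real.log (Y ω) := Real.log_le_log (Real.exp_pos _) (hYlb ω)
    · calc Real.log (Y ω) ≤ Real.log ((d : ℝ) * Real.exp (t * n)) :=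
            Real.log_le_log (hYpos ω) (hYub ω)
        _ = L + t * n := by
            rw [Real.log_mul (by positivity) (Real.exp_ne_zero _), Real.log_exp]
  have hlogint : Integrable (fun ω => Real.log (Y ω)) S.μ :=
    integrable_of_bdd (L + t * n) (Real.measurable_log.comp hYmeas) hlogbd
  have hlogYint : Integrable (fun ω => Real.log (Y ω) / t) S.μ := hlogint.div_const t
  -- Jensen via log x ≤ x - 1
  set c := ∫ ω, Y ω ∂S.μ with hc
  have hcpos : 0 < c := by
    have : Real.exp (-(t * n)) ≤ c := by
      calc Real.exp (-(t * n)) = ∫ _ω, Real.exp (-(t * n)) ∂S.μ := by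
            rw [integral_const]; simp
        _ ≤ c := integral_mono (integrable_const _) hYint hYlb
    exact lt_of_lt_of_le (Real.exp_pos _) this
  have step4 : ∫ ω, Real.log (Y ω) ∂S.μ ≤ Real.log c := by
    have hpt : ∀ ω, Real.log (Y ω) ≤ Y ω / c - 1 + Real.log c := by
      intro ω
      have h1 : Real.log (Y ω / c) ≤ Y ω / c - 1 :=
        Real.log_le_sub_one_of_pos (div_pos (hYpos ω) hcpos)
      rw [Real.log_div (hYpos ω).ne' hcpos.ne'] at h1
      linarith
    calc ∫ ω, Real.log (Y ω) ∂S.μ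
        ≤ ∫ ω, (Y ω / c - 1 + Real.log c) ∂S.μ := by
          apply integral_mono hlogint _ hpt
          exact ((hYint.div_const c).sub (integrable_const _)).add (integrable_const _)
      _ = Real.log c := by
          rw [integral_add (f := fun ω => Y ω / c - 1) (g := fun _ => Real.log c)
              ((hYint.div_const c).sub (integrable_const _)) (integrable_const _),
            integral_sub (f := fun ω => Y ω / c) (g := fun _ => (1:ℝ))
              (hYint.div_const c) (integrable_const _), integral_div, integral_const,
            integral_const]
          simp only [measure_univ, probReal_univ, ENNReal.toReal_one, smul_eq_mul, one_mul, ← hc,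
            div_self hcpos.ne']
          ring
  -- compute c via mgf
  have hmgf : ∀ j : Fin d, ∫ ω, Real.exp (t * Z j ω) ∂S.μ ≤ Real.exp ((n:ℝ) * (t ^ 2 / 8)) := by
    intro j
    have hfam : iIndepFun (m := fun _ : ℕ => (inferInstance : MeasurableSpace ℝ))
        (fun k => (fun x => x - S.p j) ∘ S.A k j) S.μ :=
      (S.indep_arm j).comp _ (fun k => measurable_id.sub measurable_const)
    have hfmeas : ∀ k : ℕ, Measurable ((fun x => x - S.p j) ∘ S.A k j) :=
      fun k => (measurable_id.sub measurable_const).comp (S.hAmeas k j)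
    have hsum : Z j = ∑ k ∈ Finset.range n, (fun x => x - S.p j) ∘ S.A k j := by
      funext ω
      rw [hZ]
      simp [Finset.sum_apply, Function.comp]
    have hmgfsum := hfam.mgf_sum hfmeas (Finset.range n) (t := t)
    have : ∫ ω, Real.exp (t * Z j ω) ∂S.μ = mgf (Z j) S.μ t := rfl
    rw [this, hsum, hmgfsum]
    calc ∏ k ∈ Finset.range n, mgf ((fun x => x - S.p j) ∘ S.A k j) S.μ t
        ≤ ∏ _k ∈ Finset.range n, Real.exp (t ^ 2 / 8) := by
          apply Finset.prod_le_prod (fun k _ => mgf_nonneg)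
          intro k _
          have : mgf ((fun x => x - S.p j) ∘ S.A k j) S.μ t
              = ∫ ω, Real.exp (t * (S.A k j ω - S.p j)) ∂S.μ := rfl
          rw [this, S.integral_fA k j (fun x => Real.exp (t * (x - S.p j)))]
          exact bern_mgf_le (S.hp j).1 (S.hp j).2 ht.le
      _ = Real.exp ((n:ℝ) * (t ^ 2 / 8)) := by
          rw [Finset.prod_const, ← Real.exp_nat_mul]
          simp
  have hcle : c ≤ (d : ℝ) * Real.exp ((n:ℝ) * (t ^ 2 / 8)) := by
    rw [hc, hY]
    rw [integral_finset_sum _ (fun j _ => by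
      apply integrable_of_bdd (Real.exp (t * n)) ((hZmeas j).const_mul t).exp
      intro ω
      rw [abs_of_pos (Real.exp_pos _)]
      apply Real.exp_le_exp.2
      have := (abs_le.1 (hZbd j ω)).2
      nlinarith)]
    calc ∑ j : Fin d, ∫ ω, Real.exp (t * Z j ω) ∂S.μ
        ≤ ∑ _j : Fin d, Real.exp ((n:ℝ) * (t ^ 2 / 8)) := Finset.sum_le_sum (fun j _ => hmgf j)
      _ = (d : ℝ) * Real.exp ((n:ℝ) * (t ^ 2 / 8)) := by simp [mul_comm]
  have hlogc : Real.log c ≤ L + (n:ℝ) * (t ^ 2 / 8) := by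
    calc Real.log c ≤ Real.log ((d : ℝ) * Real.exp ((n:ℝ) * (t ^ 2 / 8))) :=
          Real.log_le_log hcpos hcle
      _ = L + (n:ℝ) * (t ^ 2 / 8) := by
          rw [Real.log_mul (Nat.cast_ne_zero.mpr (by omega)) (Real.exp_ne_zero _),
            Real.log_exp]
  -- final algebra
  have hnt : (n:ℝ) * (t ^ 2 / 8) = L := by
    rw [ht2]
    field_simp
  have hfin : (L + L) / t = Real.sqrt ((n:ℝ) * L / 2) := by
    have key : Real.sqrt ((n:ℝ) * L / 2) * t = 2 * L := by
      rw [htdef, ← Real.sqrt_mul (by positivity)]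
      have : (n:ℝ) * L / 2 * (8 * L / n) = (2 * L) ^ 2 := by
        field_simp
        ring
      rw [this, Real.sqrt_sq (by positivity)]
    rw [div_eq_iff ht.ne', show L + L = 2 * L by ring]
    exact key.symm
  calc ∫ ω, (⨆ j, Z j ω) ∂S.μ
      ≤ ∫ ω, Real.log (Y ω) / t ∂S.μ := integral_mono hsupint hlogYint step1
    _ = (∫ ω, Real.log (Y ω) ∂S.μ) / t := by rw [integral_div]
    _ ≤ Real.log c / t := by gcongr
    _ ≤ (L + (n:ℝ) * (t ^ 2 / 8)) / t := by gcongr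
    _ = (L + L) / t := by rw [hnt]
    _ = Real.sqrt ((n:ℝ) * L / 2) := hfin

end Core

/-- **Proposition 1.1 (i)**: for any admissible strategy, after `n` plays,
`0 ≤ E[Rₙ] - R̄ₙ ≤ √(n log d / 2)`. -/
theorem regret_sub_pseudoRegret (d : ℕ) (hd : 1 ≤ d) (Ω : Type) [MeasurableSpace Ω]
    (S : Bandit d Ω) (n : ℕ) :
    0 ≤ (∫ ω, S.regret n ω ∂S.μ) - S.pseudoRegret n ∧
      (∫ ω, S.regret n ω ∂S.μ) - S.pseudoRegret n
        ≤ Real.sqrt ((n : ℝ) * Real.log d / 2) := by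
  classical
  haveI := S.prob
  haveI : Nonempty (Fin d) := Fin.pos_iff_nonempty.mp hd
  set X : Fin d → Ω → ℝ :=
    fun j ω => ∑ k ∈ Finset.range n, (S.A k j ω - S.A k (S.I k ω) ω) with hX
  set W : Ω → ℝ := fun ω => ∑ k ∈ Finset.range n, S.A k (S.I k ω) ω with hW
  have hAI : ∀ k, Measurable (fun ω => S.A k (S.I k ω) ω) := by
    intro k
    have hI : Measurable (S.I k) := (S.hImeas k).mono (S.F.le k) le_rfl
    have huncurry : Measurable (fun q : Ω × Fin d => S.A k q.2 q.1) :=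
      measurable_from_prod_countable_left (fun j => S.hAmeas k j)
    exact huncurry.comp (measurable_id.prodMk hI)
  have hAIbd : ∀ k ω, |S.A k (S.I k ω) ω| ≤ 1 := fun k ω => S.A_abs_le k _ ω
  have hXmeas : ∀ j, Measurable (X j) := fun j =>
    Finset.measurable_sum _ (fun k _ => (S.hAmeas k j).sub (hAI k))
  have hXbd : ∀ j ω, |X j ω| ≤ n := by
    intro j ω
    calc |X j ω| ≤ ∑ k ∈ Finset.range n, |S.A k j ω - S.A k (S.I k ω) ω| :=
          Finset.abs_sum_le_sum_abs _ _
      _ ≤ ∑ _k ∈ Finset.range n, (1 : ℝ) := by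
          apply Finset.sum_le_sum
          intro k _
          have h1 := S.A_nonneg k j ω
          have h2 := S.A_le_one k j ω
          have h3 := S.A_nonneg k (S.I k ω) ω
          have h4 := S.A_le_one k (S.I k ω) ω
          rw [abs_le]; constructor <;> linarith
      _ = n := by simp
  have hXint : ∀ j, Integrable (X j) S.μ := fun j =>
    integrable_of_bdd n (hXmeas j) (hXbd j)
  have hWmeas : Measurable W := Finset.measurable_sum _ (fun k _ => hAI k)
  have hWbd : ∀ ω, |W ω| ≤ n := by
    intro ω
    calc |W ω| ≤ ∑ k ∈ Finset.range n, |S.A k (S.I k ω) ω| := Finset.abs_sum_le_sum_abs _ _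
      _ ≤ ∑ _k ∈ Finset.range n, (1 : ℝ) := Finset.sum_le_sum (fun k _ => hAIbd k ω)
      _ = n := by simp
  have hWint : Integrable W S.μ := integrable_of_bdd n hWmeas hWbd
  have hreg : S.regret n = fun ω => ⨆ j, X j ω := rfl
  have hbddX : ∀ ω, BddAbove (Set.range fun j => X j ω) := fun ω =>
    Set.Finite.bddAbove (Set.finite_range _)
  have hregmeas : Measurable (S.regret n) := by rw [hreg]; exact Measurable.iSup hXmeas
  have hregbd : ∀ ω, |S.regret n ω| ≤ n := by
    intro ω
    rw [hreg, abs_le]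
    constructor
    · calc -(n:ℝ) ≤ X (Classical.arbitrary _) ω :=
            (abs_le.1 (hXbd (Classical.arbitrary _) ω)).1
        _ ≤ ⨆ j, X j ω := le_ciSup (hbddX ω) _
    · exact ciSup_le fun j => (abs_le.1 (hXbd j ω)).2
  have hregint : Integrable (S.regret n) S.μ := integrable_of_bdd n hregmeas hregbd
  have hpseudo : S.pseudoRegret n = ⨆ j, ∫ ω, X j ω ∂S.μ := rfl
  -- lower bound
  have hlow : S.pseudoRegret n ≤ ∫ ω, S.regret n ω ∂S.μ := by
    rw [hpseudo]
    apply ciSup_le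
    intro j
    apply integral_mono (hXint j) hregint
    intro ω
    rw [hreg]
    exact le_ciSup (hbddX ω) j
  -- upper bound
  set Z : Fin d → Ω → ℝ := fun j ω => ∑ k ∈ Finset.range n, (S.A k j ω - S.p j) with hZ
  have hZmeas : ∀ j, Measurable (Z j) := fun j =>
    Finset.measurable_sum _ (fun k _ => (S.hAmeas k j).sub measurable_const)
  have hZbd : ∀ j ω, |Z j ω| ≤ n := by
    intro j ω
    calc |Z j ω| ≤ ∑ k ∈ Finset.range n, |S.A k j ω - S.p j| := Finset.abs_sum_le_sum_abs _ _
      _ ≤ ∑ _k ∈ Finset.range n, (1 : ℝ) := by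
          apply Finset.sum_le_sum
          intro k _
          have h1 := S.A_nonneg k j ω
          have h2 := S.A_le_one k j ω
          have h3 := (S.hp j).1
          have h4 := (S.hp j).2
          rw [abs_le]; constructor <;> linarith
      _ = n := by simp
  have hbddZ : ∀ ω, BddAbove (Set.range fun j => Z j ω) := fun ω =>
    Set.Finite.bddAbove (Set.finite_range _)
  have hsupZmeas : Measurable (fun ω => ⨆ j, Z j ω) := Measurable.iSup hZmeas
  have hsupZbd : ∀ ω, |⨆ j, Z j ω| ≤ n := by
    intro ω
    rw [abs_le]
    constructor
    · calc -(n:ℝ) ≤ Z (Classical.arbitrary _) ω :=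
            (abs_le.1 (hZbd (Classical.arbitrary _) ω)).1
        _ ≤ ⨆ j, Z j ω := le_ciSup (hbddZ ω) _
    · exact ciSup_le fun j => (abs_le.1 (hZbd j ω)).2
  have hsupZint : Integrable (fun ω => ⨆ j, Z j ω) S.μ :=
    integrable_of_bdd n hsupZmeas hsupZbd
  have hAkint : ∀ k j, Integrable (S.A k j) S.μ := fun k j =>
    integrable_of_bdd 1 (S.hAmeas k j) (S.A_abs_le k j)
  -- the mean of X j
  have hEX : ∀ j, ∫ ω, X j ω ∂S.μ = (∑ k ∈ Finset.range n, S.p j) - ∫ ω, W ω ∂S.μ := by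
    intro j
    have hXsplit : X j = fun ω => (∑ k ∈ Finset.range n, S.A k j ω) - W ω := by
      funext ω
      show (∑ k ∈ Finset.range n, (S.A k j ω - S.A k (S.I k ω) ω))
        = (∑ k ∈ Finset.range n, S.A k j ω) - ∑ k ∈ Finset.range n, S.A k (S.I k ω) ω
      rw [Finset.sum_sub_distrib]
    rw [hXsplit]
    rw [integral_sub (by
      exact integrable_finset_sum _ (fun k _ => hAkint k j)) hWint]
    congr 1
    rw [integral_finset_sum _ (fun k _ => hAkint k j)]
    exact Finset.sum_congr rfl (fun k _ => S.integral_A k j)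
  -- pointwise upper bound for the regret
  have hptwise : ∀ ω, S.regret n ω ≤
      (⨆ j, Z j ω) + S.pseudoRegret n + ((∫ ω', W ω' ∂S.μ) - W ω) := by
    intro ω
    rw [hreg]
    apply ciSup_le
    intro j
    have hid : X j ω = Z j ω + (∫ ω', X j ω' ∂S.μ) + ((∫ ω', W ω' ∂S.μ) - W ω) := by
      rw [hEX j]
      show (∑ k ∈ Finset.range n, (S.A k j ω - S.A k (S.I k ω) ω))
        = (∑ k ∈ Finset.range n, (S.A k j ω - S.p j))
          + ((∑ k ∈ Finset.range n, S.p j) - ∫ ω', W ω' ∂S.μ)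
          + ((∫ ω', W ω' ∂S.μ) - ∑ k ∈ Finset.range n, S.A k (S.I k ω) ω)
      simp only [Finset.sum_sub_distrib]
      ring
    rw [hid]
    have h1 : Z j ω ≤ ⨆ j', Z j' ω := le_ciSup (hbddZ ω) j
    have h2 : (∫ ω', X j ω' ∂S.μ) ≤ S.pseudoRegret n := by
      rw [hpseudo]
      exact le_ciSup (f := fun j => ∫ ω, X j ω ∂S.μ)
        (Set.Finite.bddAbove (Set.finite_range _)) j
    linarith
  -- integrate
  have hupper : ∫ ω, S.regret n ω ∂S.μ
      ≤ (∫ ω, (⨆ j, Z j ω) ∂S.μ) + S.pseudoRegret n := by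
    have hrhsint : Integrable
        (fun ω => (⨆ j, Z j ω) + S.pseudoRegret n + ((∫ ω', W ω' ∂S.μ) - W ω)) S.μ :=
      (hsupZint.add (integrable_const _)).add ((integrable_const _).sub hWint)
    calc ∫ ω, S.regret n ω ∂S.μ
        ≤ ∫ ω, ((⨆ j, Z j ω) + S.pseudoRegret n + ((∫ ω', W ω' ∂S.μ) - W ω)) ∂S.μ :=
          integral_mono hregint hrhsint hptwise
      _ = (∫ ω, (⨆ j, Z j ω) ∂S.μ) + S.pseudoRegret n := by
          rw [integral_add (f := fun ω => (⨆ j, Z j ω) + S.pseudoRegret n)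
              (g := fun ω => (∫ ω', W ω' ∂S.μ) - W ω)
              (hsupZint.add (integrable_const _)) ((integrable_const _).sub hWint),
            integral_add (f := fun ω => ⨆ j, Z j ω) (g := fun _ => S.pseudoRegret n)
              hsupZint (integrable_const _),
            integral_sub (f := fun _ => ∫ ω', W ω' ∂S.μ) (g := W)
              (integrable_const _) hWint, integral_const, integral_const]
          simp
  refine ⟨by linarith, ?_⟩
  have hcore := S.integral_iSup_Z_le hd n
  linarith

end
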